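/- Let R be a commutative ring and let K = D^perf(R) be the homotopy category of bounded complexes of finitely generated projective R-modules. Let λ : R → End(K) be the ring homomorphism sending r ∈ R to the family of multiplication-by-r endomorphisms on every complex, and let σ : End(K) → R be the map sending α to α_𝟙, viewed as an element of R via the identification End_K(𝟙) ≅ R, where 𝟙 is the complex R concentrated in degree zero. Then σ is a ring homomorphism with σ ∘ λ = id_R, and every α ∈ End(K) with σ(α) = 0 is pointwise nilpotent. -/

import Mathlib

namespace Balmer

open CategoryTheory CategoryTheory.Limits

universe u

variable (R : Type u) [CommRing R]

/-- The homotopy category of cochain complexes of `R`-modules. -/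
abbrev HtpyCat := HomotopyCategory (ModuleCat.{u} R) (ComplexShape.up ℤ)

/-- The objects of `D^perf(R) = K^b(P(R))`: those complexes of `R`-modules which are
bounded and degreewise finitely generated projective. -/
def IsPerf (X : HtpyCat R) : Prop :=
  (∃ a b : ℤ, ∀ i : ℤ, (i < a ∨ b < i) → IsZero (X.as.X i)) ∧
  (∀ i : ℤ, Module.Finite R (X.as.X i) ∧ Module.Projective R (X.as.X i))

/-- `D^perf(R)`, the homotopy category of bounded complexes of finitely generated
projective `R`-modules, as a full subcategory of the homotopy category. -/
abbrev Dperf := ObjectProperty.FullSubcategory (IsPerf R)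

/-- The complex `𝟙 = (⋯ → 0 → R → 0 → ⋯)` concentrated in degree zero, as an object
of the homotopy category. -/
noncomputable def oneCplx : HtpyCat R :=
  (HomotopyCategory.quotient (ModuleCat.{u} R) (ComplexShape.up ℤ)).obj
    ((HomologicalComplex.single (ModuleCat.{u} R) (ComplexShape.up ℤ) 0).obj
      (ModuleCat.of R R))

variable {R}

/-- The `n`-fold composition of an endomorphism with itself. -/
def endPow {X : HtpyCat R} (f : X ⟶ X) : ℕ → (X ⟶ X)
  | 0 => 𝟙 X
  | (n + 1) => endPow f n ≫ f

/-- An endomorphism of the identity functor of `D^perf(R)` which commutes with the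
translation (the shift of complexes, inherited from the homotopy category). -/
structure REnd (R : Type u) [CommRing R] where
  app : ∀ X : Dperf R, X.obj ⟶ X.obj
  natural : ∀ {X Y : Dperf R} (f : X.obj ⟶ Y.obj), f ≫ app Y = app X ≫ f
  shift : ∀ (X Y : Dperf R) (e : Y.obj ≅ (shiftFunctor (HtpyCat R) (1 : ℤ)).obj X.obj),
    app Y = e.hom ≫ (shiftFunctor (HtpyCat R) (1 : ℤ)).map (app X) ≫ e.inv

/-- Multiplication (composition) in `End(D^perf(R))`. -/
def REnd.mul (α β : REnd R) : REnd R where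
  app X := α.app X ≫ β.app X
  natural {X Y} f := by
    try dsimp only
    rw [← Category.assoc, α.natural f, Category.assoc, β.natural f, ← Category.assoc]
  shift X Y e := by
    try dsimp only
    rw [α.shift X Y e, β.shift X Y e]
    simp only [Category.assoc, Iso.inv_hom_id_assoc, ← Functor.map_comp_assoc]

/-- The unit of `End(D^perf(R))`. -/
def REnd.one : REnd R where
  app X := 𝟙 X.obj
  natural {X Y} f := by (try dsimp only); rw [Category.comp_id, Category.id_comp]
  shift X Y e := by (try dsimp only); rw [CategoryTheory.Functor.map_id]; simp

/-- Addition in `End(D^perf(R))`. -/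
def REnd.add (α β : REnd R) : REnd R where
  app X := α.app X + β.app X
  natural {X Y} f := by
    try dsimp only
    rw [Preadditive.comp_add, Preadditive.add_comp, α.natural f, β.natural f]
  shift X Y e := by
    try dsimp only
    rw [Functor.map_add, α.shift X Y e, β.shift X Y e]
    simp [Preadditive.comp_add, Preadditive.add_comp]

/-- `α ∈ End(D^perf(R))` is pointwise nilpotent if each `α_X` is nilpotent. -/
def REnd.PNil (α : REnd R) : Prop :=
  ∀ X : Dperf R, ∃ n : ℕ, endPow (α.app X) (n + 1) = 0

open HomologicalComplex

/-- The quotient functor to the homotopy category. -/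
noncomputable abbrev Qf (R : Type u) [CommRing R] :
    CochainComplex (ModuleCat.{u} R) ℤ ⥤ HtpyCat R :=
  HomotopyCategory.quotient (ModuleCat.{u} R) (ComplexShape.up ℤ)

lemma subsingleton_of_isZero {N : ModuleCat.{u} R} (h : IsZero N) : Subsingleton N := by
  refine ⟨fun x y => ?_⟩
  have h0 : (𝟙 N : N ⟶ N) = 0 := h.eq_of_src _ _
  have hx : ∀ z : N, z = 0 := fun z => by
    have := LinearMap.congr_fun (congrArg ModuleCat.Hom.hom h0) z
    simpa using this
  rw [hx x, hx y]

lemma isPerf_SD (a : ℤ) (M : ModuleCat.{u} R) [Module.Finite R M] [Module.Projective R M] :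
    IsPerf R ((Qf R).obj ((single (ModuleCat.{u} R) (ComplexShape.up ℤ) a).obj M)) := by
  constructor
  · exact ⟨a, a, fun i hi => isZero_single_obj_X _ _ _ _ (by omega)⟩
  · intro i
    by_cases hi : i = a
    · subst hi
      have e := (singleObjXSelf (ComplexShape.up ℤ) i M).toLinearEquiv
      exact ⟨Module.Finite.equiv e.symm, Module.Projective.of_equiv e.symm⟩
    · have hz := isZero_single_obj_X (ComplexShape.up ℤ) a M i hi
      haveI : Subsingleton
          ((((Qf R).obj ((single (ModuleCat.{u} R) (ComplexShape.up ℤ) a).obj M)).as.X i)) :=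
        subsingleton_of_isZero hz
      exact ⟨Module.Finite.of_finite, Module.Projective.of_free⟩

/-- The single complex, as an object of `Dperf`. -/
noncomputable def SD (a : ℤ) (M : ModuleCat.{u} R) [Module.Finite R M]
    [Module.Projective R M] : Dperf R :=
  ⟨(Qf R).obj ((single (ModuleCat.{u} R) (ComplexShape.up ℤ) a).obj M), isPerf_SD a M⟩

instance : Module.Finite R (ModuleCat.of R R) := inferInstanceAs (Module.Finite R R)
instance : Module.Projective R (ModuleCat.of R R) :=
  inferInstanceAs (Module.Projective R R)

lemma SD_app_zero_of_zero (α : REnd R)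
    (h : α.app (SD 0 (ModuleCat.of R R)) = 0)
    (M : ModuleCat.{u} R) [Module.Finite R M] [Module.Projective R M] :
    α.app (SD 0 M) = 0 := by
  obtain ⟨u, hu⟩ := (Qf R).map_surjective
    (X := (single (ModuleCat.{u} R) (ComplexShape.up ℤ) 0).obj M)
    (Y := (single (ModuleCat.{u} R) (ComplexShape.up ℤ) 0).obj M)
    (α.app (SD 0 M))
  suffices hf : u.f 0 = 0 by
    have hu0 : u = 0 := by
      apply HomologicalComplex.hom_ext
      intro i
      by_cases hi : i = 0
      · subst hi; simpa using hf
      · exact (isZero_single_obj_X (ComplexShape.up ℤ) 0 M i hi).eq_of_tgt _ _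
    rw [← hu, hu0, Functor.map_zero]
    rfl
  have key : ∀ f : ModuleCat.of R R ⟶ M,
      ((single (ModuleCat.{u} R) (ComplexShape.up ℤ) 0).map f).f 0 ≫ u.f 0 = 0 := by
    intro f
    have hnat := α.natural (X := SD 0 (ModuleCat.of R R)) (Y := SD 0 M)
      ((Qf R).map ((single (ModuleCat.{u} R) (ComplexShape.up ℤ) 0).map f))
    rw [h] at hnat
    replace hnat := hnat.trans zero_comp
    rw [← hu] at hnat
    replace hnat := ((Qf R).map_comp _ _).symm.trans hnat
    have H := HomotopyCategory.homotopyOfEq _ _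
      (hnat.trans ((Qf R).map_zero _ _).symm)
    have hcomm := H.comm 0
    rw [dNext_eq _ (show (ComplexShape.up ℤ).Rel 0 1 by simp),
      prevD_eq _ (show (ComplexShape.up ℤ).Rel (-1) 0 by simp)] at hcomm
    simp [single_obj_d] at hcomm
    exact hcomm
  have hg : ∀ f : ModuleCat.of R R ⟶ M,
      f ≫ (singleObjXSelf (ComplexShape.up ℤ) 0 M).inv ≫ u.f 0 = 0 := by
    intro f
    have hk := key f
    rw [single_map_f_self] at hk
    simp only [Category.assoc] at hk
    rwa [← cancel_epi (singleObjXSelf (ComplexShape.up ℤ) 0 (ModuleCat.of R R)).hom,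
      comp_zero]
  have hzero : (singleObjXSelf (ComplexShape.up ℤ) 0 M).inv ≫ u.f 0 = 0 := by
    apply ModuleCat.hom_ext
    apply LinearMap.ext
    intro m
    have := hg (ModuleCat.ofHom (LinearMap.toSpanSingleton R M m))
    have h1 := LinearMap.congr_fun (congrArg ModuleCat.Hom.hom this) (1 : R)
    have h2 : (LinearMap.toSpanSingleton R (↑M) m) (1 : R) = m :=
      by simp
    simp only [ModuleCat.hom_comp, ModuleCat.hom_ofHom, LinearMap.comp_apply, h2] at h1
    simpa using h1
  rw [← Category.id_comp (u.f 0), ← (singleObjXSelf (ComplexShape.up ℤ) 0 M).hom_inv_id,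
    Category.assoc, hzero, comp_zero]

lemma SD_shift_iff (α : REnd R) (b : ℤ) (M : ModuleCat.{u} R)
    [Module.Finite R M] [Module.Projective R M] :
    α.app (SD (b+1) M) = 0 ↔ α.app (SD b M) = 0 := by
  have e : (SD b M).obj ≅ (shiftFunctor (HtpyCat R) (1 : ℤ)).obj (SD (b+1) M).obj :=
    ((HomotopyCategory.singleFunctors (ModuleCat.{u} R)).shiftIso 1 b (b+1)
      (by ring)).symm.app M
  have hs := α.shift (SD (b+1) M) (SD b M) e
  constructor
  · intro h
    rw [hs, h, Functor.map_zero, zero_comp, comp_zero]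
  · intro h
    rw [h] at hs
    apply (shiftFunctor (HtpyCat R) (1 : ℤ)).map_injective
    have h3 : e.hom ≫ (shiftFunctor (HtpyCat R) (1 : ℤ)).map (α.app (SD (b+1) M)) ≫ e.inv
        = 0 := hs.symm
    have h4 : (shiftFunctor (HtpyCat R) (1 : ℤ)).map (α.app (SD (b+1) M)) =
        e.inv ≫ (e.hom ≫ (shiftFunctor (HtpyCat R) (1 : ℤ)).map (α.app (SD (b+1) M)) ≫
          e.inv) ≫ e.hom := by simp
    rw [h4, h3, Functor.map_zero]
    simp

lemma SD_app_zero (α : REnd R) (h : α.app (SD 0 (ModuleCat.of R R)) = 0)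
    (a : ℤ) (M : ModuleCat.{u} R) [Module.Finite R M] [Module.Projective R M] :
    α.app (SD a M) = 0 := by
  induction a using Int.induction_on with
  | zero => exact SD_app_zero_of_zero α h M
  | succ i hi => exact (SD_shift_iff α i M).mpr hi
  | pred i hi =>
    have h2 := (SD_shift_iff α (-(i:ℤ) - 1) M).mp
    rw [show (-(i:ℤ) - 1) + 1 = -(i:ℤ) by ring] at h2
    exact h2 hi

lemma endPow_succ' {X : HtpyCat R} (f : X ⟶ X) (n : ℕ) :
    endPow f (n + 1) = f ≫ endPow f n := by
  induction n with
  | zero =>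
    show endPow f 0 ≫ f = f ≫ endPow f 0
    simp [endPow]
  | succ n ih =>
    have h1 : endPow f (n + 2) = endPow f (n + 1) ≫ f := rfl
    rw [h1, ih, Category.assoc]
    exact congrArg (fun g => f ≫ g) ih

lemma pnil_of_SD_zero (α : REnd R)
    (hS : ∀ (a : ℤ) (M : ModuleCat.{u} R) [Module.Finite R M] [Module.Projective R M],
      α.app (SD a M) = 0)
    (X : Dperf R) (a : ℤ) (n : ℕ)
    (hsupp : ∀ i : ℤ, (i < a ∨ a + n < i) → IsZero (X.obj.as.X i)) :
    endPow (α.app X) (n + 2) = 0 := by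
  obtain ⟨u, hu⟩ := (Qf R).map_surjective (X := X.obj.as) (Y := X.obj.as) (α.app X)
  have step : ∀ k : ℕ, ∃ w : X.obj.as ⟶ X.obj.as,
      (Qf R).map w = endPow (α.app X) k ∧ ∀ i : ℤ, i < a + k → w.f i = 0 := by
    intro k
    induction k with
    | zero =>
      refine ⟨𝟙 _, ?_, ?_⟩
      · rw [CategoryTheory.Functor.map_id]; rfl
      · intro i hi
        exact (hsupp i (Or.inl (by omega))).eq_of_src _ _
    | succ k ih =>
      obtain ⟨w, hwQ, hw0⟩ := ih
      haveI : Module.Finite R (X.obj.as.X (a + (k:ℤ))) := (X.property.2 (a + (k:ℤ))).1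
      haveI : Module.Projective R (X.obj.as.X (a + (k:ℤ))) := (X.property.2 (a + (k:ℤ))).2
      have hθcond : ∀ i, (ComplexShape.up ℤ).Rel i (a + (k:ℤ)) →
          X.obj.as.d i (a + (k:ℤ)) ≫ w.f (a + (k:ℤ)) = 0 := by
        intro i hi
        have hrel : i + 1 = a + (k:ℤ) := hi
        rw [← HomologicalComplex.Hom.comm, hw0 i (by omega), zero_comp]
      set θ : X.obj.as ⟶ (single (ModuleCat.{u} R) (ComplexShape.up ℤ) (a + (k:ℤ))).obj
          (X.obj.as.X (a + (k:ℤ))) := mkHomToSingle (w.f (a + (k:ℤ))) hθcond with hθ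
      have hnat := α.natural (X := X) (Y := SD (a + (k:ℤ)) (X.obj.as.X (a + (k:ℤ))))
        ((Qf R).map θ)
      rw [hS (a + (k:ℤ)) (X.obj.as.X (a + (k:ℤ)))] at hnat
      replace hnat := comp_zero.symm.trans hnat
      rw [← hu] at hnat
      replace hnat := hnat.trans ((Qf R).map_comp u θ).symm
      have H := HomotopyCategory.homotopyOfEq (u ≫ θ) 0
        (by rw [← hnat, Functor.map_zero]; rfl)
      have hcomm := H.comm (a + (k:ℤ))
      rw [dNext_eq _ (show (ComplexShape.up ℤ).Rel (a + (k:ℤ)) (a + (k:ℤ) + 1) by simp),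
        prevD_eq _ (show (ComplexShape.up ℤ).Rel (a + (k:ℤ) - 1) (a + (k:ℤ)) by simp)]
        at hcomm
      simp only [HomologicalComplex.comp_f, single_obj_d, comp_zero, add_zero,
        HomologicalComplex.zero_f_apply, hθ, mkHomToSingle_f] at hcomm
      set h' : X.obj.as.X (a + (k:ℤ) + 1) ⟶ X.obj.as.X (a + (k:ℤ)) :=
        H.hom (a + (k:ℤ) + 1) (a + (k:ℤ)) ≫
          (singleObjXSelf (ComplexShape.up ℤ) (a + (k:ℤ)) (X.obj.as.X (a + (k:ℤ)))).hom
        with hh'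
      have heq : u.f (a + (k:ℤ)) ≫ w.f (a + (k:ℤ)) =
          X.obj.as.d (a + (k:ℤ)) (a + (k:ℤ) + 1) ≫ h' := by
        have h2 := congrArg (fun g => g ≫ (singleObjXSelf (ComplexShape.up ℤ) (a + (k:ℤ))
          (X.obj.as.X (a + (k:ℤ)))).hom) hcomm
        simpa [hh', Category.assoc] using h2
      set ν : X.obj.as ⟶ X.obj.as := Homotopy.nullHomotopicMap' (fun i j _ =>
        if hij : i = a + (k:ℤ) + 1 ∧ j = a + (k:ℤ) then
          eqToHom (show X.obj.as.X i = X.obj.as.X (a + (k:ℤ) + 1) by rw [hij.1]) ≫ h' ≫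
            eqToHom (show X.obj.as.X (a + (k:ℤ)) = X.obj.as.X j by rw [hij.2])
        else 0) with hν
      refine ⟨(u ≫ w) - ν, ?_, ?_⟩
      · have hν0 : (Qf R).map ν = 0 := by
          have h3 := HomotopyCategory.eq_of_homotopy ν 0
            (by rw [hν]; exact Homotopy.nullHomotopy' _)
          rw [h3, Functor.map_zero]
        rw [Functor.map_sub, hν0, sub_zero, Functor.map_comp, hu, hwQ]
        exact (endPow_succ' (α.app X) k).symm
      · intro i hi
        have hi' : i < a + (k:ℤ) + 1 := by omega
        rw [HomologicalComplex.sub_f_apply, HomologicalComplex.comp_f, hν,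
          Homotopy.nullHomotopicMap'_f (show (ComplexShape.up ℤ).Rel (i-1) i by simp)
            (show (ComplexShape.up ℤ).Rel i (i+1) by simp)]
        rcases (by omega : i < a + (k:ℤ) ∨ i = a + (k:ℤ)) with hlt | heqi
        · rw [hw0 i hlt, comp_zero, dif_neg (by rintro ⟨h1, h2⟩; omega),
            dif_neg (by rintro ⟨h1, h2⟩; omega)]
          simp
        · subst heqi
          rw [dif_pos ⟨rfl, rfl⟩, dif_neg (by rintro ⟨h1, h2⟩; omega)]
          simp only [eqToHom_refl, Category.id_comp, Category.comp_id, zero_comp, add_zero]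
          rw [heq]
          simp
  obtain ⟨w, hwQ, hw0⟩ := step (n + 2)
  have hw : w = 0 := by
    apply HomologicalComplex.hom_ext
    intro i
    by_cases hi : i < a + (n:ℤ) + 2
    · rw [hw0 i (by omega)]
      simp
    · exact (hsupp i (Or.inr (by omega))).eq_of_tgt _ _
  rw [← hwQ, hw, Functor.map_zero]
  rfl

lemma pnil_of_app_single_zero (α : REnd R)
    (h : α.app (SD 0 (ModuleCat.of R R)) = 0) : α.PNil := by
  intro X
  obtain ⟨a, b, hab⟩ := X.property.1
  refine ⟨(b - a).toNat + 1, ?_⟩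
  have hsupp : ∀ i : ℤ, (i < a ∨ a + (((b - a).toNat : ℕ) : ℤ) < i) →
      IsZero (X.obj.as.X i) := by
    intro i hi
    apply hab i
    omega
  exact pnil_of_SD_zero α (fun a M _ _ => SD_app_zero α h a M) X a ((b - a).toNat) hsupp


/-- Proposition 8.1 (1) and (2): let `K = D^perf(R)` and let
`λ : R → End(K)` send `r` to multiplication by `r` everywhere, and
`σ : End(K) → R` send `α` to `α_𝟙 ∈ End_K(𝟙) ≅ R`, where `𝟙` is the complex `R`
concentrated in degree zero.  Then `σ` is a ring homomorphism with `σ ∘ λ = id_R`,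
and every `α` with `σ(α) = 0` is pointwise nilpotent. -/
theorem stmt18
    (one : Dperf R)
    (eone : one.obj ≅ oneCplx R)
    (ε : CategoryTheory.End one.obj ≃+* R)
    (hε : ∀ r : R, ε (r • 𝟙 one.obj) = r)
    (lam : R → REnd R) (hlam : ∀ (r : R) (X : Dperf R), (lam r).app X = r • 𝟙 X.obj)
    (sig : REnd R → R) (hsig : ∀ α : REnd R, sig α = ε (α.app one)) :
    (∀ α β : REnd R, sig (α.mul β) = sig α * sig β) ∧
    (∀ α β : REnd R, sig (α.add β) = sig α + sig β) ∧
    sig REnd.one = 1 ∧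
    (∀ r : R, sig (lam r) = r) ∧
    (∀ α : REnd R, sig α = 0 → α.PNil) := by
  refine ⟨?_, ?_, ?_, ?_, ?_⟩
  · intro α β
    let x : CategoryTheory.End one.obj := α.app one
    let y : CategoryTheory.End one.obj := β.app one
    have h2 : (α.mul β).app one = y * x := rfl
    rw [hsig, hsig, hsig, h2, ε.map_mul, mul_comm]
  · intro α β
    let x : CategoryTheory.End one.obj := α.app one
    let y : CategoryTheory.End one.obj := β.app one
    have h2 : (α.add β).app one = x + y := rfl
    rw [hsig, hsig, hsig, h2, ε.map_add]
  · rw [hsig]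
    have h1 : (REnd.one : REnd R).app one = (1 : CategoryTheory.End one.obj) := rfl
    rw [h1, ε.map_one]
  · intro r
    rw [hsig, hlam]
    exact hε r
  · intro α hα
    have h1 : α.app one = 0 := by
      apply ε.injective
      rw [ε.map_zero, ← hsig α, hα]
    apply pnil_of_app_single_zero
    have hnat := α.natural (X := one) (Y := SD 0 (ModuleCat.of R R)) (eone.hom)
    rw [h1] at hnat
    replace hnat := hnat.trans zero_comp
    have h2 : α.app (SD 0 (ModuleCat.of R R)) =
        eone.inv ≫ (eone.hom ≫ α.app (SD 0 (ModuleCat.of R R))) := by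
      exact (eone.inv_hom_id_assoc _).symm
    exact h2.trans ((eone.inv ≫= hnat).trans comp_zero)

end Balmer
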